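/- arXiv:math/0601770 — 3 statements merged into one kernel-verified Lean document; each statement's English description precedes it below -/
import Mathlib

section
/- Let Δ be the root system of a complex simple Lie algebra with base Π. Suppose α = α₁ + ⋯ + α_k is a positive root written as a sum of simple roots such that every partial sum α₁ + ⋯ + α_l (1 ≤ l ≤ k) is a root, and suppose β is a positive root such that β − α is a root. Then there exists an index i with 1 ≤ i ≤ k such that β − α_i is a root or β = α_i. -/
open scoped InnerProductSpace

variable {V : Type*} [NormedAddCommGroup V] [InnerProductSpace ℝ V]

/-- A (reduced, crystallographic) root system in a real inner product space. -/
structure IsRootSystem (Δ : Set V) : Prop where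
  finite : Δ.Finite
  nonzero : (0 : V) ∉ Δ
  span_top : Submodule.span ℝ Δ = ⊤
  reflect_mem : ∀ α ∈ Δ, ∀ β ∈ Δ, β - (2 * ⟪β, α⟫_ℝ / ⟪α, α⟫_ℝ) • α ∈ Δ
  crystallographic : ∀ α ∈ Δ, ∀ β ∈ Δ, ∃ n : ℤ, 2 * ⟪β, α⟫_ℝ / ⟪α, α⟫_ℝ = (n : ℝ)
  reduced : ∀ α ∈ Δ, ∀ t : ℝ, t • α ∈ Δ → t = 1 ∨ t = -1

/-- `Pi` is a base of simple roots for the root system `Δ`. -/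
structure IsBase (Δ : Set V) (Pi : Finset V) : Prop where
  subset : ↑Pi ⊆ Δ
  indep : LinearIndependent ℝ (fun γ : {x // x ∈ Pi} => (γ : V))
  decomp : ∀ α ∈ Δ, (∃ c : V → ℕ, α = ∑ γ ∈ Pi, (c γ : ℝ) • γ) ∨
      (∃ c : V → ℕ, α = -∑ γ ∈ Pi, (c γ : ℝ) • γ)

/-- `α` is a positive root with respect to the base `Pi`. -/
def IsPos (Δ : Set V) (Pi : Finset V) (α : V) : Prop :=
  α ∈ Δ ∧ ∃ c : V → ℕ, α = ∑ γ ∈ Pi, (c γ : ℝ) • γ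

/-- The dominance order associated with the base `Pi`. -/
def DomLe (Pi : Finset V) (ω₁ ω₂ : V) : Prop :=
  ∃ c : V → ℕ, ω₂ = ω₁ + ∑ γ ∈ Pi, (c γ : ℝ) • γ

/-- `θ` is the highest root of `Δ` with respect to the base `Pi`. -/
def IsHighest (Δ : Set V) (Pi : Finset V) (θ : V) : Prop :=
  θ ∈ Δ ∧ ∀ α ∈ Δ, DomLe Pi α θ

/-- The root system `Δ` is irreducible. -/
def IsIrred (Δ : Set V) : Prop :=
  ∀ Δ₁ Δ₂ : Set V, Δ = Δ₁ ∪ Δ₂ → (∀ a ∈ Δ₁, ∀ b ∈ Δ₂, ⟪a, b⟫_ℝ = 0) →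
    Δ₁ = ∅ ∨ Δ₂ = ∅

namespace RS
lemma ne_zero {Δ : Set V} (hΔ : IsRootSystem Δ) {x : V} (hx : x ∈ Δ) : x ≠ 0 :=
  fun h => hΔ.nonzero (h ▸ hx)

lemma inner_self_pos {Δ : Set V} (hΔ : IsRootSystem Δ) {x : V} (hx : x ∈ Δ) :
    0 < ⟪x, x⟫_ℝ := by
  rcases (real_inner_self_nonneg (x := x)).lt_or_eq with h | h
  · exact h
  · exact absurd (real_inner_self_nonpos.mp (le_of_eq h.symm)) (ne_zero hΔ hx)

lemma neg_mem {Δ : Set V} (hΔ : IsRootSystem Δ) {x : V} (hx : x ∈ Δ) : -x ∈ Δ := by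
  have h := hΔ.reflect_mem x hx x hx
  have h0 : ⟪x, x⟫_ℝ ≠ 0 := (inner_self_pos hΔ hx).ne'
  rw [show (2 * ⟪x, x⟫_ℝ / ⟪x, x⟫_ℝ) = 2 by field_simp] at h
  have h2 : x - (2 : ℝ) • x = -x := by rw [two_smul]; abel
  rwa [h2] at h

lemma add_mem_of_inner_neg {Δ : Set V} (hΔ : IsRootSystem Δ) {x y : V}
    (hx : x ∈ Δ) (hy : y ∈ Δ) (hxy : ⟪x, y⟫_ℝ < 0) (hne : x + y ≠ 0) : x + y ∈ Δ := by
  obtain ⟨p, hp⟩ := hΔ.crystallographic y hy x hx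
  obtain ⟨q, hq⟩ := hΔ.crystallographic x hx y hy
  have hxx := inner_self_pos hΔ hx
  have hyy := inner_self_pos hΔ hy
  have hyx : ⟪y, x⟫_ℝ < 0 := by rwa [real_inner_comm]
  have hpneg : (p : ℝ) < 0 := by
    rw [← hp]; exact div_neg_of_neg_of_pos (by linarith) hyy
  have hqneg : (q : ℝ) < 0 := by
    rw [← hq]; exact div_neg_of_neg_of_pos (by linarith) hxx
  have hp1 : p ≤ -1 := by
    have : p < 0 := by exact_mod_cast hpneg
    omega
  have hq1 : q ≤ -1 := by
    have : q < 0 := by exact_mod_cast hqneg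
    omega
  have hCS : ⟪x, y⟫_ℝ * ⟪x, y⟫_ℝ ≤ ⟪x, x⟫_ℝ * ⟪y, y⟫_ℝ := real_inner_mul_inner_self_le x y
  have hpqr : (p : ℝ) * q = 4 * (⟪x, y⟫_ℝ * ⟪x, y⟫_ℝ) / (⟪x, x⟫_ℝ * ⟪y, y⟫_ℝ) := by
    rw [← hp, ← hq, real_inner_comm y x]
    field_simp
    ring
  have hpq4 : (p : ℤ) * q ≤ 4 := by
    have : (p : ℝ) * q ≤ 4 := by
      rw [hpqr, div_le_iff₀ (by positivity)]; nlinarith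
    exact_mod_cast this
  have key : p = -1 ∨ q = -1 := by
    by_contra hcon
    push_neg at hcon
    have hp2 : p ≤ -2 := by omega
    have hq2 : q ≤ -2 := by omega
    have h4 : (p : ℤ) * q = 4 := by nlinarith
    have heq : ⟪x, y⟫_ℝ * ⟪x, y⟫_ℝ = ⟪x, x⟫_ℝ * ⟪y, y⟫_ℝ := by
      have h4r : (p : ℝ) * q = 4 := by exact_mod_cast h4
      rw [hpqr] at h4r
      field_simp at h4r
      linarith
    -- equality case of Cauchy–Schwarz: x and y are parallel
    have hxy' : ⟪x, -y⟫_ℝ = ‖x‖ * ‖(-y : V)‖ := by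
      rw [inner_neg_right, norm_neg]
      have hsq : (-⟪x, y⟫_ℝ) * (-⟪x, y⟫_ℝ) = (‖x‖ * ‖y‖) * (‖x‖ * ‖y‖) := by
        rw [real_inner_self_eq_norm_sq, real_inner_self_eq_norm_sq] at heq
        nlinarith [heq]
      have hu : 0 < -⟪x, y⟫_ℝ := by linarith
      have hv : 0 ≤ ‖x‖ * ‖y‖ := by positivity
      nlinarith [hsq, hu, hv]
    have hpar := inner_eq_norm_mul_iff_real.mp hxy'
    rw [norm_neg] at hpar
    -- ‖y‖ • x = ‖x‖ • (-y)
    have hy0 : ‖y‖ ≠ 0 := norm_ne_zero_iff.mpr (ne_zero hΔ hy)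
    have hp2' : ‖y‖ • x = (-‖x‖) • y := by rw [hpar]; simp
    have hxp : x = (-(‖x‖ / ‖y‖)) • y := by
      have h3 : x = (‖y‖⁻¹ * -‖x‖) • y := by
        rw [← smul_smul, ← hp2', smul_smul, inv_mul_cancel₀ hy0, one_smul]
      have hsc : -(‖x‖ / ‖y‖) = ‖y‖⁻¹ * -‖x‖ := by field_simp
      rw [hsc]
      exact h3
    have hmem : (-(‖x‖ / ‖y‖)) • y ∈ Δ := hxp ▸ hx
    rcases hΔ.reduced y hy _ hmem with h1 | h1
    · have hxn : 0 < ‖x‖ / ‖y‖ := by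
        apply div_pos (norm_pos_iff.mpr (ne_zero hΔ hx)) (norm_pos_iff.mpr (ne_zero hΔ hy))
      linarith
    · apply hne
      have : -(‖x‖ / ‖y‖) = -1 := h1
      rw [hxp, this]
      simp
  rcases key with h | h
  · have hr := hΔ.reflect_mem y hy x hx
    rw [hp, h] at hr
    have e : x - ((-1 : ℤ) : ℝ) • y = x + y := by push_cast; rw [neg_one_smul]; abel
    rwa [e] at hr
  · have hr := hΔ.reflect_mem x hx y hy
    rw [hq, h] at hr
    have e : y - ((-1 : ℤ) : ℝ) • x = x + y := by push_cast; rw [neg_one_smul]; abel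
    rwa [e] at hr

lemma sub_mem_of_inner_pos {Δ : Set V} (hΔ : IsRootSystem Δ) {x y : V}
    (hx : x ∈ Δ) (hy : y ∈ Δ) (hxy : 0 < ⟪x, y⟫_ℝ) (hne : x ≠ y) : x - y ∈ Δ := by
  have h := add_mem_of_inner_neg hΔ hx (neg_mem hΔ hy) (by rw [inner_neg_right]; linarith)
    (by intro h; apply hne; rwa [add_neg_eq_zero] at h)
  rwa [← sub_eq_add_neg] at h

lemma jacobi {Δ : Set V} (hΔ : IsRootSystem Δ) {a b ν : V}
    (ha : a ∈ Δ) (hb : b ∈ Δ) (hν : ν ∈ Δ) (hab : a + b ∈ Δ) (hβ : ν + a + b ∈ Δ) :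
    (ν + a ∈ Δ ∨ ν + a = 0) ∨ (ν + b ∈ Δ ∨ ν + b = 0) := by
  by_contra hcon
  push_neg at hcon
  obtain ⟨⟨hna, hna0⟩, hnb, hnb0⟩ := hcon
  have hia : 0 ≤ ⟪ν, a⟫_ℝ := by
    by_contra h
    exact hna (add_mem_of_inner_neg hΔ hν ha (by linarith) hna0)
  have hib : 0 ≤ ⟪ν, b⟫_ℝ := by
    by_contra h
    exact hnb (add_mem_of_inner_neg hΔ hν hb (by linarith) hnb0)
  have habs := inner_self_pos hΔ hab
  have hsum : 0 < ⟪ν + a + b, a⟫_ℝ + ⟪ν + a + b, b⟫_ℝ := by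
    have e : ⟪ν + a + b, a⟫_ℝ + ⟪ν + a + b, b⟫_ℝ = ⟪ν, a + b⟫_ℝ + ⟪a + b, a + b⟫_ℝ := by
      simp only [inner_add_left, inner_add_right]
      ring
    rw [e, inner_add_right]
    linarith
  rcases lt_or_ge 0 ⟪ν + a + b, a⟫_ℝ with h | h
  · have hne : ν + a + b ≠ a := by
      intro he
      apply hnb0
      have : ν + b = (ν + a + b) - a := by abel
      rw [this, he]; abel
    have := sub_mem_of_inner_pos hΔ hβ ha h hne
    apply hnb
    have e : ν + a + b - a = ν + b := by abel
    rwa [e] at this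
  · have hb' : 0 < ⟪ν + a + b, b⟫_ℝ := by linarith
    have hne : ν + a + b ≠ b := by
      intro he
      apply hna0
      have : ν + a = (ν + a + b) - b := by abel
      rw [this, he]; abel
    have := sub_mem_of_inner_pos hΔ hβ hb hb' hne
    apply hna
    have e : ν + a + b - b = ν + a := by abel
    rwa [e] at this
end RS

lemma main_aux {Δ : Set V} (hΔ : IsRootSystem Δ) :
    ∀ k : ℕ, 1 ≤ k → ∀ αs : ℕ → V, (∀ i < k, αs i ∈ Δ) →
    (∀ l, 1 ≤ l → l ≤ k → (∑ i ∈ Finset.range l, αs i) ∈ Δ) →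
    ∀ β ∈ Δ, β - ∑ i ∈ Finset.range k, αs i ∈ Δ →
    ∃ i < k, β - αs i ∈ Δ ∨ β = αs i := by
  intro k
  induction k with
  | zero => omega
  | succ m IH =>
    intro _ αs hroots hpartial β hβ hβα
    rcases Nat.eq_zero_or_pos m with hm | hm
    · subst hm
      refine ⟨0, by omega, Or.inl ?_⟩
      simpa using hβα
    · set α' := ∑ i ∈ Finset.range m, αs i with hα'
      have hα'Δ : α' ∈ Δ := hpartial m hm (by omega)
      have hbΔ : αs m ∈ Δ := hroots m (by omega)
      have habΔ : α' + αs m ∈ Δ := by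
        have h := hpartial (m + 1) (by omega) le_rfl
        rwa [Finset.sum_range_succ] at h
      have hνΔ : β - (α' + αs m) ∈ Δ := by
        have h := hβα
        rwa [Finset.sum_range_succ] at h
      have hβ' : (β - (α' + αs m)) + α' + αs m ∈ Δ := by
        have e : (β - (α' + αs m)) + α' + αs m = β := by abel
        rwa [e]
      rcases RS.jacobi hΔ hα'Δ hbΔ hνΔ habΔ hβ' with (h | h) | (h | h)
      · refine ⟨m, by omega, Or.inl ?_⟩
        have e : β - (α' + αs m) + α' = β - αs m := by abel
        rwa [e] at h
      · refine ⟨m, by omega, Or.inr ?_⟩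
        have e : β - αs m = 0 := by rw [← h]; abel
        exact sub_eq_zero.mp e
      · have hba : β - α' ∈ Δ := by
          have e : β - (α' + αs m) + αs m = β - α' := by abel
          rwa [e] at h
        obtain ⟨i, hi, hres⟩ := IH hm αs (fun i hi => hroots i (by omega))
          (fun l h1 h2 => hpartial l h1 (by omega)) β hβ hba
        exact ⟨i, by omega, hres⟩
      · have hβeq : β = α' := by
          have e : β - α' = 0 := by rw [← h]; abel
          exact sub_eq_zero.mp e
        rcases Nat.lt_or_ge m 2 with hm2 | hm2
        · have hm1 : m = 1 := by omega
          refine ⟨0, by omega, Or.inr ?_⟩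
          rw [hβeq, hα', hm1]
          simp
        · obtain ⟨n, rfl⟩ := Nat.exists_eq_succ_of_ne_zero (by omega : m ≠ 0)
          refine ⟨n, by omega, Or.inl ?_⟩
          have hsplit : α' = ∑ i ∈ Finset.range n, αs i + αs n := by
            rw [hα', Finset.sum_range_succ]
          have e : β - αs n = ∑ i ∈ Finset.range n, αs i := by
            rw [hβeq, hsplit]; abel
          rw [e]
          exact hpartial n (by omega) (by omega)


/-- If a positive root `α = α₁ + ⋯ + α_k` is written as a sum of simple roots with all
partial sums roots, and `β` is a positive root with `β − α ∈ Δ`, then some `α_i`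
satisfies `β − α_i ∈ Δ` or `β = α_i`. -/
theorem exists_extremal_in_support {V : Type*} [NormedAddCommGroup V]
    [InnerProductSpace ℝ V] (Δ : Set V) (Pi : Finset V)
    (hΔ : IsRootSystem Δ) (hB : IsBase Δ Pi)
    (k : ℕ) (hk : 1 ≤ k) (αs : ℕ → V) (hαs : ∀ i < k, αs i ∈ Pi)
    (α : V) (hα : α = ∑ i ∈ Finset.range k, αs i)
    (hpartial : ∀ l, 1 ≤ l → l ≤ k → (∑ i ∈ Finset.range l, αs i) ∈ Δ)
    (hαpos : IsPos Δ Pi α)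
    (β : V) (hβ : IsPos Δ Pi β) (hβα : β - α ∈ Δ) :
    ∃ i < k, β - αs i ∈ Δ ∨ β = αs i := by
  subst hα
  exact main_aux hΔ k hk αs (fun i hi => hB.subset (hαs i hi)) hpartial β hβ.1 hβα
end

section
/- Let g be a complex simple Lie algebra and let P ⊆ Δ₊ be a nonempty set of positive roots satisfying: (i) for all α, β ∈ Δ₊ with α + β ∈ Δ₊, if α ∈ P or β ∈ P then α + β ∈ P; (ii) for all α, β ∈ Δ₊ with α + β ∈ P, both α ∈ P and β ∈ P. Then P = Δ₊. -/
open scoped InnerProductSpace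

variable {V : Type*} [NormedAddCommGroup V] [InnerProductSpace ℝ V]

section AuxLemmas

variable {V : Type*} [NormedAddCommGroup V] [InnerProductSpace ℝ V]
  {Δ : Set V} {Pi : Finset V}

lemma coeff_eq_zero (hB : IsBase Δ Pi) (e : V → ℝ)
    (h : ∑ γ ∈ Pi, e γ • γ = 0) : ∀ γ ∈ Pi, e γ = 0 := by
  have h' : ∑ γ : {x // x ∈ Pi}, e γ • (γ : V) = 0 := by
    rw [Finset.sum_coe_sort Pi (fun γ => e γ • γ)]; exact h
  have := Fintype.linearIndependent_iff.mp hB.indep (fun γ => e γ) h'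
  exact fun γ hγ => this ⟨γ, hγ⟩

lemma root_neg_mem (hΔ : IsRootSystem Δ) {α : V} (hα : α ∈ Δ) : -α ∈ Δ := by
  have h0 : α ≠ 0 := fun h => hΔ.nonzero (h ▸ hα)
  have hne : ⟪α, α⟫_ℝ ≠ 0 := inner_self_ne_zero.mpr h0
  have hr := hΔ.reflect_mem α hα α hα
  have h2 : (2 * ⟪α, α⟫_ℝ / ⟪α, α⟫_ℝ) = 2 := by field_simp
  rw [h2, two_smul] at hr
  have : α - (α + α) = -α := by abel
  rwa [this] at hr

lemma pos_add_pos (hB : IsBase Δ Pi) {α β : V} (hα : IsPos Δ Pi α) (hβ : IsPos Δ Pi β)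
    (hm : α + β ∈ Δ) : IsPos Δ Pi (α + β) := by
  obtain ⟨-, c, hc⟩ := hα; obtain ⟨-, d, hd⟩ := hβ
  refine ⟨hm, fun γ => c γ + d γ, ?_⟩
  rw [hc, hd, ← Finset.sum_add_distrib]
  exact Finset.sum_congr rfl fun γ _ => by push_cast; rw [add_smul]

lemma not_pos_and_neg (hΔ : IsRootSystem Δ) (hB : IsBase Δ Pi) {α : V}
    (h1 : IsPos Δ Pi α) (h2 : IsPos Δ Pi (-α)) : False := by
  obtain ⟨hm, c, hc⟩ := h1; obtain ⟨-, d, hd⟩ := h2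
  have hsum : ∑ γ ∈ Pi, ((c γ : ℝ) + (d γ : ℝ)) • γ = 0 := by
    simp only [add_smul, Finset.sum_add_distrib, ← hc, ← hd]
    abel
  have hz := coeff_eq_zero hB _ hsum
  have hα0 : α = 0 := by
    rw [hc]
    refine Finset.sum_eq_zero fun γ hγ => ?_
    have h0 := hz γ hγ
    have hc0 : (c γ : ℝ) = 0 := by
      have := Nat.cast_nonneg (α := ℝ) (c γ)
      have := Nat.cast_nonneg (α := ℝ) (d γ)
      linarith
    rw [hc0, zero_smul]
  exact hΔ.nonzero (hα0 ▸ hm)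

lemma root_add_root (hΔ : IsRootSystem Δ) {α β : V} (hα : α ∈ Δ) (hβ : β ∈ Δ)
    (hne : α + β ≠ 0) (hin : ⟪α, β⟫_ℝ < 0) : α + β ∈ Δ := by
  have h0α : α ≠ 0 := fun h => hΔ.nonzero (h ▸ hα)
  have h0β : β ≠ 0 := fun h => hΔ.nonzero (h ▸ hβ)
  have hαα : 0 < ⟪α, α⟫_ℝ :=
    lt_of_le_of_ne real_inner_self_nonneg (Ne.symm (inner_self_ne_zero.mpr h0α))
  have hββ : 0 < ⟪β, β⟫_ℝ :=
    lt_of_le_of_ne real_inner_self_nonneg (Ne.symm (inner_self_ne_zero.mpr h0β))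
  obtain ⟨n, hn⟩ := hΔ.crystallographic α hα β hβ
  obtain ⟨m, hm⟩ := hΔ.crystallographic β hβ α hα
  have hba : ⟪β, α⟫_ℝ < 0 := by rwa [real_inner_comm]
  have hnneg : (n : ℝ) < 0 := by
    rw [← hn]; exact div_neg_of_neg_of_pos (by linarith) hαα
  have hmneg : (m : ℝ) < 0 := by
    rw [← hm]; exact div_neg_of_neg_of_pos (by linarith) hββ
  by_cases hn1 : n = -1
  · have hr := hΔ.reflect_mem α hα β hβ
    rw [hn, hn1] at hr
    push_cast at hr
    rw [neg_one_smul, sub_neg_eq_add] at hr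
    rwa [add_comm]
  by_cases hm1 : m = -1
  · have hr := hΔ.reflect_mem β hβ α hα
    rw [hm, hm1] at hr
    push_cast at hr
    rwa [neg_one_smul, sub_neg_eq_add] at hr
  -- both Cartan integers are ≤ -2 : forces proportionality, contradiction
  exfalso
  have hn2 : n ≤ -2 := by
    have : n < 0 := by exact_mod_cast hnneg
    omega
  have hm2 : m ≤ -2 := by
    have : m < 0 := by exact_mod_cast hmneg
    omega
  have hprod : (4 : ℝ) ≤ (n : ℝ) * (m : ℝ) := by
    have : (4 : ℤ) ≤ n * m := by nlinarith
    exact_mod_cast this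
  have hcalc : (n : ℝ) * (m : ℝ) = 4 * ⟪α, β⟫_ℝ ^ 2 / (⟪α, α⟫_ℝ * ⟪β, β⟫_ℝ) := by
    rw [← hn, ← hm, real_inner_comm β α]
    field_simp
    ring
  have hgeq : ⟪α, α⟫_ℝ * ⟪β, β⟫_ℝ ≤ ⟪α, β⟫_ℝ ^ 2 := by
    rw [hcalc, le_div_iff₀ (by positivity)] at hprod
    linarith
  have hCS : ⟪α, β⟫_ℝ ^ 2 ≤ (‖α‖ * ‖β‖) ^ 2 := by
    have h1 := abs_real_inner_le_norm α β
    have h2 := abs_nonneg ⟪α, β⟫_ℝ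
    nlinarith [sq_abs ⟪α, β⟫_ℝ]
  have hsqeq : ⟪α, β⟫_ℝ ^ 2 = (‖α‖ * ‖β‖) ^ 2 := by
    have : ⟪α, α⟫_ℝ * ⟪β, β⟫_ℝ = (‖α‖ * ‖β‖) ^ 2 := by
      rw [real_inner_self_eq_norm_mul_norm, real_inner_self_eq_norm_mul_norm]; ring
    linarith
  have hfac : (⟪α, β⟫_ℝ - ‖α‖ * ‖β‖) * (⟪α, β⟫_ℝ + ‖α‖ * ‖β‖) = 0 := by
    linear_combination hsqeq
  have heq : ⟪α, β⟫_ℝ = -(‖α‖ * ‖β‖) := by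
    rcases mul_eq_zero.mp hfac with h | h
    · have : (0:ℝ) ≤ ‖α‖ * ‖β‖ := by positivity
      linarith [sub_eq_zero.mp h]
    · linarith [h]
  have hneg : ⟪α, -β⟫_ℝ = ‖α‖ * ‖-β‖ := by
    rw [inner_neg_right, norm_neg, heq]; ring
  have hkey := inner_eq_norm_mul_iff_real.mp hneg
  rw [norm_neg, smul_neg] at hkey
  -- hkey : ‖β‖ • α = -(‖α‖ • β)
  have hαn : ‖α‖ ≠ 0 := norm_ne_zero_iff.mpr h0α
  set t : ℝ := -(‖β‖ / ‖α‖) with ht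
  have htα : t • α = β := by
    apply smul_right_injective V hαn
    show ‖α‖ • (t • α) = ‖α‖ • β
    rw [smul_smul]
    have h1 : ‖α‖ * t = -‖β‖ := by rw [ht]; field_simp
    rw [h1, neg_smul, hkey, neg_neg]
  have htΔ : t • α ∈ Δ := by rw [htα]; exact hβ
  rcases hΔ.reduced α hα t htΔ with h1' | h1'
  · have hβpos : 0 < ‖β‖ := norm_pos_iff.mpr h0β
    have hαpos : 0 < ‖α‖ := norm_pos_iff.mpr h0α
    have ht0 : t < 0 := by rw [ht]; exact neg_lt_zero.mpr (div_pos hβpos hαpos)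
    rw [h1'] at ht0; linarith
  · apply hne
    rw [← htα, h1']
    simp

lemma pos_or_neg_pos (hΔ : IsRootSystem Δ) (hB : IsBase Δ Pi) {α : V} (hα : α ∈ Δ) :
    IsPos Δ Pi α ∨ IsPos Δ Pi (-α) := by
  rcases hB.decomp α hα with ⟨c, hc⟩ | ⟨c, hc⟩
  · exact Or.inl ⟨hα, c, hc⟩
  · exact Or.inr ⟨root_neg_mem hΔ hα, c, by rw [hc, neg_neg]⟩

end AuxLemmas

/-- In the (irreducible) root system of a complex simple Lie algebra, a nonempty set
`P` of positive roots closed under adding positive roots (in either argument) and under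
splitting sums must be all of `Δ₊`. -/
theorem saturated_set_eq_pos {V : Type*} [NormedAddCommGroup V]
    [InnerProductSpace ℝ V] (Δ : Set V) (Pi : Finset V)
    (hΔ : IsRootSystem Δ) (hB : IsBase Δ Pi) (hirr : IsIrred Δ)
    (P : Set V) (hP : P ⊆ {α | IsPos Δ Pi α}) (hne : P.Nonempty)
    (h1 : ∀ α β : V, IsPos Δ Pi α → IsPos Δ Pi β → IsPos Δ Pi (α + β) →
      (α ∈ P ∨ β ∈ P) → α + β ∈ P)
    (h2 : ∀ α β : V, IsPos Δ Pi α → IsPos Δ Pi β → α + β ∈ P → α ∈ P ∧ β ∈ P) :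
    P = {α | IsPos Δ Pi α} := by
  classical
  -- the step relation on positive roots
  set R : V → V → Prop := fun u v =>
    IsPos Δ Pi u ∧ IsPos Δ Pi v ∧ (IsPos Δ Pi (v - u) ∨ IsPos Δ Pi (u - v)) with hRdef
  -- P is closed under single steps
  have hclosed : ∀ u v, R u v → u ∈ P → v ∈ P := by
    rintro u v ⟨hu, hv, hd | hd⟩ huP
    · have := h1 u (v - u) hu hd (by simpa using hv) (Or.inl huP)
      simpa using this
    · have hsum : v + (u - v) = u := by abel
      exact (h2 v (u - v) hv hd (by rwa [hsum])).1
  have hchain : ∀ u v, Relation.ReflTransGen R u v → u ∈ P → v ∈ P := by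
    intro u v h hu
    induction h with
    | refl => exact hu
    | tail _ r ih => exact hclosed _ _ r ih
  -- non-orthogonal positive roots are connected
  have step : ∀ u v, IsPos Δ Pi u → IsPos Δ Pi v → ⟪u, v⟫_ℝ ≠ 0 →
      Relation.ReflTransGen R u v := by
    intro u v hu hv hin
    by_cases huv : u = v
    · exact huv ▸ Relation.ReflTransGen.refl
    rcases lt_or_gt_of_ne hin with hneg | hpos
    · have hs0 : u + v ≠ 0 := by
        intro h
        exact not_pos_and_neg hΔ hB hu (by rwa [eq_neg_of_add_eq_zero_right h] at hv)
      have hsΔ : u + v ∈ Δ := root_add_root hΔ hu.1 hv.1 hs0 hneg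
      have hs : IsPos Δ Pi (u + v) := pos_add_pos hB hu hv hsΔ
      have r1 : R u (u + v) := ⟨hu, hs, Or.inl (by simpa using hv)⟩
      have r2 : R (u + v) v := ⟨hs, hv, Or.inr (by simpa using hu)⟩
      exact (Relation.ReflTransGen.single r1).trans (Relation.ReflTransGen.single r2)
    · have hdne : u + -v ≠ 0 := by
        intro h
        apply huv
        have := eq_neg_of_add_eq_zero_left h
        simpa using this
      have hinneg : ⟪u, -v⟫_ℝ < 0 := by
        rw [inner_neg_right]; linarith
      have hdΔ : u - v ∈ Δ := by
        have := root_add_root hΔ hu.1 (root_neg_mem hΔ hv.1) hdne hinneg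
        simpa [sub_eq_add_neg] using this
      rcases pos_or_neg_pos hΔ hB hdΔ with h | h
      · exact Relation.ReflTransGen.single ⟨hu, hv, Or.inr h⟩
      · exact Relation.ReflTransGen.single ⟨hu, hv, Or.inl (by simpa using h)⟩
  obtain ⟨a, haP⟩ := hne
  have ha : IsPos Δ Pi a := hP haP
  ext x
  simp only [Set.mem_setOf_eq]
  refine ⟨fun h => hP h, fun hx => ?_⟩
  -- connectivity via irreducibility
  set C : V → Prop := fun w =>
    (IsPos Δ Pi w ∧ Relation.ReflTransGen R a w) ∨
    (IsPos Δ Pi (-w) ∧ Relation.ReflTransGen R a (-w)) with hCdef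
  have hunion : Δ = {w ∈ Δ | C w} ∪ {w ∈ Δ | ¬ C w} := by
    ext w
    constructor
    · intro hw
      by_cases h : C w
      · exact Or.inl ⟨hw, h⟩
      · exact Or.inr ⟨hw, h⟩
    · rintro (⟨hw, -⟩ | ⟨hw, -⟩) <;> exact hw
  have horth : ∀ y ∈ {w ∈ Δ | C w}, ∀ z ∈ {w ∈ Δ | ¬ C w}, ⟪y, z⟫_ℝ = 0 := by
    rintro y ⟨hyΔ, hyC⟩ z ⟨hzΔ, hzC⟩
    by_contra hyz
    apply hzC
    have key : ∀ y' z', IsPos Δ Pi y' → Relation.ReflTransGen R a y' → IsPos Δ Pi z' →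
        ⟪y', z'⟫_ℝ ≠ 0 → Relation.ReflTransGen R a z' :=
      fun y' z' p1 p2 p3 p4 => p2.trans (step _ _ p1 p3 p4)
    rcases pos_or_neg_pos hΔ hB hzΔ with hz' | hz'
    · left
      refine ⟨hz', ?_⟩
      rcases hyC with ⟨hy', hconn⟩ | ⟨hy', hconn⟩
      · exact key _ _ hy' hconn hz' hyz
      · exact key _ _ hy' hconn hz'
          (by rw [inner_neg_left]; simpa using hyz)
    · right
      refine ⟨hz', ?_⟩
      rcases hyC with ⟨hy', hconn⟩ | ⟨hy', hconn⟩
      · exact key _ _ hy' hconn hz'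
          (by rw [inner_neg_right]; simpa using hyz)
      · exact key _ _ hy' hconn hz'
          (by rw [inner_neg_left, inner_neg_right]; simpa using hyz)
  rcases hirr _ _ hunion horth with h | h
  · exfalso
    have : a ∈ ({w ∈ Δ | C w} : Set V) :=
      ⟨ha.1, Or.inl ⟨ha, Relation.ReflTransGen.refl⟩⟩
    rw [h] at this
    exact this
  · have hxC : C x := by
      by_contra hc
      have : x ∈ ({w ∈ Δ | ¬ C w} : Set V) := ⟨hx.1, hc⟩
      rw [h] at this
      exact this
    rcases hxC with ⟨-, hconn⟩ | ⟨hx', -⟩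
    · exact hchain _ _ hconn haP
    · exact absurd hx' (fun hx' => not_pos_and_neg hΔ hB hx hx')
end

section
/- Let g be a complex semisimple Lie algebra, R₁ ⊆ Δ₊ an upward-closed set of positive roots, m = ⊕_{β∈R₁} g_β, and α a positive root such that C_α ∩ S^β ≠ ∅ for some β ∈ R₁ (i.e. some simple root in the support of α is extremal for some β ∈ R₁). Then g_α ⊆ [m, g] + [[m, g], b], where b is a Borel subalgebra containing m. -/
open scoped InnerProductSpace

variable {V : Type*} [NormedAddCommGroup V] [InnerProductSpace ℝ V]

variable {V : Type*} [NormedAddCommGroup V] [InnerProductSpace ℝ V]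

/-- A root space decomposition of the Lie algebra `L` over the root system `Δ`. -/
structure RootDecomp (k : Type*) (L : Type*) [Field k] [LieRing L] [LieAlgebra k L]
    (Δ : Set V) where
  /-- the Cartan subalgebra -/
  H : Submodule k L
  /-- the root spaces (with `gs 0 = H`) -/
  gs : V → Submodule k L
  gs_zero : gs 0 = H
  gs_ne_bot : ∀ α ∈ Δ, gs α ≠ ⊥
  gs_eq_bot : ∀ α : V, α ∉ Δ → α ≠ 0 → gs α = ⊥
  sup_eq_top : (⨆ α : V, gs α) = ⊤
  indep : iSupIndep gs
  lie_mem : ∀ α β : V, ∀ x ∈ gs α, ∀ y ∈ gs β, ⁅x, y⁆ ∈ gs (α + β)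
  lie_span : ∀ α ∈ Δ, ∀ β ∈ Δ, α + β ∈ Δ → ∀ z ∈ gs (α + β),
      ∃ x ∈ gs α, ∃ y ∈ gs β, z = ⁅x, y⁆
  exists_lie_H : ∀ α ∈ Δ, ∀ z ∈ gs α, ∃ h ∈ H, ∃ x ∈ gs α, z = ⁅h, x⁆
  coroot_span : H ≤ Submodule.span k
      {z | ∃ α ∈ Δ, ∃ x ∈ gs α, ∃ y ∈ gs (-α), z = ⁅x, y⁆}

lemma aux_inner_self_pos {Δ : Set V} (hΔ : IsRootSystem Δ) {α : V} (hα : α ∈ Δ) :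
    0 < ⟪α, α⟫_ℝ := by
  rw [real_inner_self_eq_norm_sq]
  exact pow_pos (norm_pos_iff.mpr (fun h => hΔ.nonzero (h ▸ hα))) 2

lemma aux_neg_mem {Δ : Set V} (hΔ : IsRootSystem Δ) {α : V} (hα : α ∈ Δ) : -α ∈ Δ := by
  have h := hΔ.reflect_mem α hα α hα
  have hne : ⟪α, α⟫_ℝ ≠ 0 := (aux_inner_self_pos hΔ hα).ne'
  rw [mul_div_assoc, div_self hne, mul_one] at h
  have : α - (2:ℝ) • α = -α := by
    rw [two_smul]; abel
  rwa [this] at h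

lemma aux_sub_mem {Δ : Set V} (hΔ : IsRootSystem Δ) {α β : V} (hα : α ∈ Δ) (hβ : β ∈ Δ)
    (hne : α ≠ β) (hpos : 0 < ⟪α, β⟫_ℝ) : α - β ∈ Δ := by
  obtain ⟨n, hn⟩ := hΔ.crystallographic β hβ α hα
  obtain ⟨p, hp⟩ := hΔ.crystallographic α hα β hβ
  have hββ := aux_inner_self_pos hΔ hβ
  have hαα := aux_inner_self_pos hΔ hα
  have hn1 : 1 ≤ n := by
    have : (0:ℝ) < n := by rw [← hn]; positivity
    exact_mod_cast this
  have hp1 : 1 ≤ p := by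
    have : (0:ℝ) < p := by
      rw [← hp, real_inner_comm]; positivity
    exact_mod_cast this
  rcases eq_or_lt_of_le hn1 with h1 | h2
  · have := hΔ.reflect_mem β hβ α hα
    rw [hn, ← h1] at this
    simpa using this
  rcases eq_or_lt_of_le hp1 with h1 | h2'
  · have := hΔ.reflect_mem α hα β hβ
    rw [hp, ← h1] at this
    simp only [Int.cast_one, one_smul] at this
    have := aux_neg_mem hΔ this
    rwa [neg_sub] at this
  -- both ≥ 2 : contradiction
  exfalso
  have hn2 : (2:ℝ) ≤ 2 * ⟪α, β⟫_ℝ / ⟪β, β⟫_ℝ := by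
    rw [hn]; exact_mod_cast h2
  have hp2 : (2:ℝ) ≤ 2 * ⟪β, α⟫_ℝ / ⟪α, α⟫_ℝ := by
    rw [hp]; exact_mod_cast h2'
  have h3 : ⟪β, β⟫_ℝ ≤ ⟪α, β⟫_ℝ := by
    rw [le_div_iff₀ hββ] at hn2; linarith
  have h4 : ⟪α, α⟫_ℝ ≤ ⟪α, β⟫_ℝ := by
    rw [le_div_iff₀ hαα] at hp2
    have hcomm : ⟪β, α⟫_ℝ = ⟪α, β⟫_ℝ := real_inner_comm α β
    linarith
  have h5 : ⟪α - β, α - β⟫_ℝ = ⟪α,α⟫_ℝ - 2*⟪α,β⟫_ℝ + ⟪β,β⟫_ℝ := by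
    simp [inner_sub_sub_self, real_inner_comm β α, norm_sub_sq_real]
  have h6 : (0:ℝ) < ⟪α - β, α - β⟫_ℝ := by
    rw [real_inner_self_eq_norm_sq]
    exact pow_pos (norm_pos_iff.mpr (sub_ne_zero_of_ne hne)) 2
  linarith


lemma aux_uniq {Δ : Set V} {Pi : Finset V} (hB : IsBase Δ Pi) (f : V → ℝ)
    (hf : ∑ γ ∈ Pi, f γ • γ = 0) : ∀ γ ∈ Pi, f γ = 0 := by
  have h := Fintype.linearIndependent_iff.mp hB.indep (fun γ => f γ)
  have hsum : ∑ γ : {x // x ∈ Pi}, f γ • (γ : V) = ∑ γ ∈ Pi, f γ • γ :=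
    Finset.sum_attach Pi (fun γ => f γ • γ)
  intro γ hγ
  exact h (by rw [hsum]; exact hf) ⟨γ, hγ⟩

lemma aux_sum_ne_zero {Δ : Set V} {Pi : Finset V} (hΔ : IsRootSystem Δ) (hB : IsBase Δ Pi)
    {x y : V} {a b : V → ℕ} (hx : x ∈ Δ) (hxa : x = ∑ γ ∈ Pi, (a γ : ℝ) • γ)
    (hyb : y = ∑ γ ∈ Pi, (b γ : ℝ) • γ) : x + y ≠ 0 := by
  intro h
  have hsum : ∑ γ ∈ Pi, (((a γ : ℝ)) + (b γ : ℝ)) • γ = 0 := by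
    rw [← h, hxa, hyb, ← Finset.sum_add_distrib]
    congr 1; ext γ; rw [add_smul]
  have h0 := aux_uniq hB _ hsum
  have hx0 : x = 0 := by
    rw [hxa]
    refine Finset.sum_eq_zero fun γ hγ => ?_
    have := h0 γ hγ
    have ha : (a γ : ℝ) = 0 := by
      have h1 : (0:ℝ) ≤ (a γ : ℝ) := Nat.cast_nonneg _
      have h2 : (0:ℝ) ≤ (b γ : ℝ) := Nat.cast_nonneg _
      linarith
    rw [ha, zero_smul]
  exact hΔ.nonzero (hx0 ▸ hx)

open scoped Classical

lemma aux_ind_decomp {Pi : Finset V} {δ : V} (hδ : δ ∈ Pi) :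
    δ = ∑ γ ∈ Pi, ((if γ = δ then (1:ℕ) else 0 : ℕ) : ℝ) • γ := by
  classical
  have h1 : ∀ γ ∈ Pi, ((if γ = δ then (1:ℕ) else 0 : ℕ) : ℝ) • γ = if γ = δ then γ else 0 := by
    intro γ _; split <;> simp
  rw [Finset.sum_congr rfl h1, Finset.sum_ite_eq' Pi δ (fun x => x), if_pos hδ]

lemma aux_simple_coeff {Δ : Set V} {Pi : Finset V} (hB : IsBase Δ Pi) {δ γ : V} {c : V → ℕ}
    (hδ : δ ∈ Pi) (hc : δ = ∑ γ ∈ Pi, (c γ : ℝ) • γ) (hγ : γ ∈ Pi) (hne : γ ≠ δ) :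
    c γ = 0 := by
  classical
  have h1 : ∀ x ∈ Pi, ((c x : ℝ) - (if x = δ then (1:ℝ) else 0)) • x
      = (c x : ℝ) • x - (if x = δ then x else 0) := by
    intro x _; split <;> simp [sub_smul]
  have hsum : ∑ x ∈ Pi, ((c x : ℝ) - (if x = δ then (1:ℝ) else 0)) • x = 0 := by
    rw [Finset.sum_congr rfl h1, Finset.sum_sub_distrib, ← hc,
      Finset.sum_ite_eq' Pi δ (fun x => x), if_pos hδ, sub_self]
  have h2 := aux_uniq hB _ hsum γ hγ
  rw [if_neg hne, sub_zero] at h2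
  exact_mod_cast h2

lemma aux_exists_pos_inner {Δ : Set V} {Pi : Finset V} (hΔ : IsRootSystem Δ)
    {α : V} {c : V → ℕ} (hα : α ∈ Δ) (hc : α = ∑ γ ∈ Pi, (c γ : ℝ) • γ) :
    ∃ δ ∈ Pi, c δ ≠ 0 ∧ 0 < ⟪α, δ⟫_ℝ := by
  by_contra h
  push_neg at h
  have hle : ∀ δ ∈ Pi, (c δ : ℝ) * ⟪α, δ⟫_ℝ ≤ 0 := by
    intro δ hδ
    by_cases h0 : c δ = 0
    · simp [h0]
    · exact mul_nonpos_of_nonneg_of_nonpos (Nat.cast_nonneg _) (h δ hδ h0)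
  have hsum : ⟪α, α⟫_ℝ = ∑ δ ∈ Pi, (c δ : ℝ) * ⟪α, δ⟫_ℝ := by
    calc ⟪α, α⟫_ℝ = ⟪α, ∑ γ ∈ Pi, (c γ : ℝ) • γ⟫_ℝ := by rw [← hc]
    _ = ∑ δ ∈ Pi, ⟪α, (c δ : ℝ) • δ⟫_ℝ := by rw [inner_sum]
    _ = ∑ δ ∈ Pi, (c δ : ℝ) * ⟪α, δ⟫_ℝ :=
        Finset.sum_congr rfl fun δ _ => real_inner_smul_right α δ _
  have h1 : ⟪α, α⟫_ℝ ≤ 0 := hsum ▸ Finset.sum_nonpos hle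
  exact absurd (aux_inner_self_pos hΔ hα) (not_lt.mpr h1)



open scoped Classical in
lemma aux_sub_simple_decomp {Pi : Finset V} {a δ : V} {cc : V → ℕ} (hδ : δ ∈ Pi)
    (hca : a = ∑ x ∈ Pi, (cc x : ℝ) • x) (hne : cc δ ≠ 0) :
    (a - δ = ∑ x ∈ Pi, ((if x = δ then cc x - 1 else cc x : ℕ) : ℝ) • x) ∧
    (∑ x ∈ Pi, (if x = δ then cc x - 1 else cc x : ℕ)) + 1 = ∑ x ∈ Pi, cc x := by
  have h1 : 1 ≤ cc δ := Nat.one_le_iff_ne_zero.mpr hne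
  constructor
  · have key : ∀ x ∈ Pi, ((if x = δ then cc x - 1 else cc x : ℕ) : ℝ) • x
        = (cc x : ℝ) • x - (if x = δ then x else 0) := by
      intro x _
      by_cases hx : x = δ
      · subst hx
        rw [if_pos rfl, if_pos rfl, Nat.cast_sub h1, Nat.cast_one, sub_smul, one_smul]
      · rw [if_neg hx, if_neg hx, sub_zero]
    rw [Finset.sum_congr rfl key, Finset.sum_sub_distrib, ← hca,
      Finset.sum_ite_eq' Pi δ (fun x => x), if_pos hδ]
  · have key : ∀ x ∈ Pi, cc x = (if x = δ then cc x - 1 else cc x) + (if x = δ then 1 else 0) := by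
      intro x _
      by_cases hx : x = δ
      · subst hx; rw [if_pos rfl, if_pos rfl, Nat.sub_add_cancel h1]
      · rw [if_neg hx, if_neg hx, add_zero]
    conv_rhs => rw [Finset.sum_congr rfl key]
    rw [Finset.sum_add_distrib, Finset.sum_ite_eq' Pi δ (fun _ => 1), if_pos hδ]


/-- If `α` is a positive root whose support meets `S^β` for some `β ∈ R₁` (an
upward-closed set of positive roots), `m = ⊕_{β∈R₁} g_β`, and `b` is a Borel subalgebra
containing `m`, then `g_α ⊆ [m, g] + [[m, g], b]`. -/
theorem rootSpace_subset_bracket_of_support {k L : Type*} [Field k] [LieRing L]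
    [LieAlgebra k L] (Δ : Set V) (Pi : Finset V)
    (hΔ : IsRootSystem Δ) (hB : IsBase Δ Pi)
    (D : RootDecomp k L Δ)
    (R₁ : Set V) (hR₁pos : R₁ ⊆ {β | IsPos Δ Pi β})
    (hup : ∀ ω ∈ R₁, ∀ γ : V, IsPos Δ Pi γ → ω + γ ∈ Δ → ω + γ ∈ R₁)
    (m b Vm W : Submodule k L)
    (hm : m = ⨆ β ∈ R₁, D.gs β)
    (hb : b = D.H ⊔ ⨆ δ ∈ {δ | IsPos Δ Pi δ}, D.gs δ)
    (hVm : Vm = Submodule.span k {z | ∃ x ∈ m, ∃ y : L, z = ⁅x, y⁆})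
    (hW : W = Submodule.span k {z | ∃ v ∈ Vm, ∃ x ∈ b, z = ⁅v, x⁆})
    (α : V) (hα : IsPos Δ Pi α)
    (c : V → ℕ) (hc : α = ∑ γ ∈ Pi, (c γ : ℝ) • γ)
    (hmeet : ∃ β ∈ R₁, ∃ γ ∈ Pi, c γ ≠ 0 ∧ (β = γ ∨ β - γ ∈ Δ)) :
    D.gs α ≤ Vm ⊔ W := by
  classical
  -- basic membership facts
  have hmle : ∀ β' ∈ R₁, D.gs β' ≤ m := by
    intro β' hβ'
    rw [hm]
    exact le_iSup₂ (f := fun (β : V) (_ : β ∈ R₁) => D.gs β) β' hβ'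
  have hgenVm : ∀ x ∈ m, ∀ y : L, ⁅x, y⁆ ∈ Vm := by
    intro x hx y
    rw [hVm]
    exact Submodule.subset_span ⟨x, hx, y, rfl⟩
  have hVmneg : ∀ x ∈ m, ∀ y : L, ⁅y, x⁆ ∈ Vm := by
    intro x hx y
    have := hgenVm x hx y
    rw [← lie_skew]
    exact neg_mem this
  have hposb : ∀ δ : V, IsPos Δ Pi δ → D.gs δ ≤ b := by
    intro δ hδ
    rw [hb]
    exact le_trans (le_iSup₂ (f := fun (δ : V) (_ : δ ∈ {δ | IsPos Δ Pi δ}) => D.gs δ) δ hδ)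
      le_sup_right
  -- [b, m] ⊆ m
  have h_bm : ∀ y ∈ b, ∀ x ∈ m, ⁅y, x⁆ ∈ m := by
    have inner : ∀ y : L, (∀ β' ∈ R₁, ∀ x ∈ D.gs β', ⁅y, x⁆ ∈ m) → ∀ x ∈ m, ⁅y, x⁆ ∈ m := by
      intro y hy x hx
      have hle : m ≤ Submodule.comap (LieAlgebra.ad k L y) m := by
        conv_lhs => rw [hm]
        refine iSup₂_le fun β' hβ' => fun x hx => ?_
        simpa [Submodule.mem_comap, LieAlgebra.ad_apply] using hy β' hβ' x hx
      simpa [Submodule.mem_comap, LieAlgebra.ad_apply] using hle hx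
    let NN : Submodule k L :=
      { carrier := {y | ∀ x ∈ m, ⁅y, x⁆ ∈ m}
        add_mem' := by
          intro u v hu hv x hx
          rw [add_lie]; exact add_mem (hu x hx) (hv x hx)
        zero_mem' := by
          intro x hx
          rw [zero_lie]; exact zero_mem m
        smul_mem' := by
          intro t u hu x hx
          rw [smul_lie]; exact Submodule.smul_mem m t (hu x hx) }
    suffices hbN : b ≤ NN by exact fun y hy => hbN hy
    rw [hb]
    refine sup_le ?_ (iSup₂_le fun δ hδ => ?_)
    · intro y hy
      refine inner y fun β' hβ' x hx => ?_
      have hy0 : y ∈ D.gs 0 := by rw [D.gs_zero]; exact hy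
      have := D.lie_mem 0 β' y hy0 x hx
      rw [zero_add] at this
      exact hmle β' hβ' this
    · intro y hy
      refine inner y fun β' hβ' x hx => ?_
      have hlie := D.lie_mem δ β' y hy x hx
      rw [add_comm] at hlie
      by_cases hmem : β' + δ ∈ Δ
      · exact hmle _ (hup β' hβ' δ hδ hmem) hlie
      · obtain ⟨hβ'Δ, cβ, hcβ⟩ := hR₁pos hβ'
        obtain ⟨hδΔ, cδ', hcδ'⟩ := (hδ : IsPos Δ Pi δ)
        have hne : β' + δ ≠ 0 := aux_sum_ne_zero hΔ hB hβ'Δ hcβ hcδ'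
        rw [D.gs_eq_bot _ hmem hne, Submodule.mem_bot] at hlie
        rw [hlie]; exact zero_mem m
  -- Vm is stable under bracketing with b
  have h_Vmb : ∀ v ∈ Vm, ∀ y ∈ b, ⁅v, y⁆ ∈ Vm := by
    intro v hv y hy
    let P : Submodule k L :=
      { carrier := {v | ⁅v, y⁆ ∈ Vm}
        add_mem' := by
          intro u w hu hw
          show ⁅u + w, y⁆ ∈ Vm
          rw [add_lie]; exact add_mem hu hw
        zero_mem' := by show ⁅(0 : L), y⁆ ∈ Vm; rw [zero_lie]; exact zero_mem Vm
        smul_mem' := by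
          intro t u hu
          show ⁅t • u, y⁆ ∈ Vm
          rw [smul_lie]; exact Submodule.smul_mem Vm t hu }
    suffices hVP : Vm ≤ P by exact hVP hv
    rw [hVm]
    refine Submodule.span_le.mpr ?_
    rintro z ⟨u, hu, w, rfl⟩
    show ⁅⁅u, w⁆, y⁆ ∈ Vm
    rw [lie_lie]
    refine sub_mem (hgenVm u hu _) ?_
    have h1 : ⁅y, u⁆ ∈ m := h_bm y hy u hu
    have h2 : ⁅u, y⁆ ∈ m := by rw [← lie_skew]; exact neg_mem h1
    exact hVmneg _ h2 w
  -- root spaces of roots in R₁ are in Vm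
  have memVm_R₁ : ∀ ω ∈ R₁, D.gs ω ≤ Vm := by
    intro ω hω z hz
    obtain ⟨hωΔ, -⟩ := hR₁pos hω
    obtain ⟨h, hh, x, hx, rfl⟩ := D.exists_lie_H ω hωΔ z hz
    exact hVmneg x (hmle ω hω hx) h
  -- root spaces of roots of the form β' + ρ with β' ∈ R₁ are in Vm
  have memVm_split : ∀ β' ∈ R₁, ∀ ρ ∈ Δ, β' + ρ ∈ Δ → D.gs (β' + ρ) ≤ Vm := by
    intro β' hβ' ρ hρ hsum z hz
    obtain ⟨hβ'Δ, -⟩ := hR₁pos hβ'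
    obtain ⟨x, hx, y, hy, rfl⟩ := D.lie_span β' hβ'Δ ρ hρ hsum z hz
    exact hgenVm x (hmle β' hβ' hx) y
  -- main induction on the height
  have main : ∀ n : ℕ, ∀ cc : V → ℕ, ∀ a : V, a ∈ Δ → a = ∑ x ∈ Pi, (cc x : ℝ) • x →
      (∑ x ∈ Pi, cc x) = n → ∀ γ ∈ Pi, cc γ ≠ 0 → ∀ β ∈ R₁, (β = γ ∨ β - γ ∈ Δ) →
      D.gs a ≤ Vm := by
    intro n
    induction n using Nat.strong_induction_on with
    | _ n ih =>
      intro cc a haΔ hca hht γ hγ hccγ β hβ hcond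
      have hγΔ : γ ∈ Δ := hB.subset hγ
      obtain ⟨hβΔ, cβ, hcβ⟩ := hR₁pos hβ
      by_cases haγ : a = γ
      · -- base case : a is the simple root γ
        rcases hcond with hbg | hβγ
        · have haR : a ∈ R₁ := by rw [haγ, ← hbg]; exact hβ
          exact memVm_R₁ a haR
        · have hγβΔ : γ - β ∈ Δ := by
            have := aux_neg_mem hΔ hβγ
            rwa [neg_sub] at this
          have heq : β + (γ - β) = a := by rw [haγ]; abel
          have := memVm_split β hβ (γ - β) hγβΔ (by rw [heq]; exact haΔ)
          rwa [heq] at this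
      · obtain ⟨δ, hδPi, hccδ, hinner⟩ := aux_exists_pos_inner hΔ haΔ hca
        have hδΔ : δ ∈ Δ := hB.subset hδPi
        by_cases hbranch : δ = γ ∧ cc γ = 1
        · -- direct case
          obtain ⟨hδγ, hccγ1⟩ := hbranch
          rw [hδγ] at hinner
          have haγΔ : a - γ ∈ Δ := aux_sub_mem hΔ haΔ hγΔ haγ hinner
          obtain ⟨hdec, -⟩ := aux_sub_simple_decomp hγ hca hccγ
          set c' : V → ℕ := fun x => if x = γ then cc x - 1 else cc x with hc'
          rcases hcond with hbg | hβγ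
          · have hγR : γ ∈ R₁ := hbg ▸ hβ
            have heq : γ + (a - γ) = a := by abel
            have := memVm_split γ hγR (a - γ) haγΔ (by rw [heq]; exact haΔ)
            rwa [heq] at this
          · have hγβΔ : γ - β ∈ Δ := by
              have := aux_neg_mem hΔ hβγ
              rwa [neg_sub] at this
            by_cases hβμ : β + (a - γ) ∈ Δ
            · have hμpos : IsPos Δ Pi (a - γ) := ⟨haγΔ, c', hdec⟩
              have hβμR : β + (a - γ) ∈ R₁ := hup β hβ (a - γ) hμpos hβμ
              have heq : (β + (a - γ)) + (γ - β) = a := by abel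
              have := memVm_split (β + (a - γ)) hβμR (γ - β) hγβΔ (by rw [heq]; exact haΔ)
              rwa [heq] at this
            · -- Jacobi identity argument
              intro z hz
              have heq1 : (a - γ) + γ = a := by abel
              obtain ⟨y, hy, x, hx, rfl⟩ :=
                D.lie_span (a - γ) haγΔ γ hγΔ (by rw [heq1]; exact haΔ) z (by rwa [heq1])
              have heq2 : β + (γ - β) = γ := by abel
              obtain ⟨xb, hxb, x', hx', rfl⟩ :=
                D.lie_span β hβΔ (γ - β) hγβΔ (by rw [heq2]; exact hγΔ) x (by rwa [heq2])
              have hzero : ⁅y, xb⁆ = 0 := by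
                have hlie := D.lie_mem (a - γ) β y hy xb hxb
                have hne : (a - γ) + β ≠ 0 := aux_sum_ne_zero hΔ hB haγΔ hdec hcβ
                have hnr : (a - γ) + β ∉ Δ := by rwa [add_comm] at hβμ
                rw [D.gs_eq_bot _ hnr hne, Submodule.mem_bot] at hlie
                exact hlie
              have hjac : ⁅y, ⁅xb, x'⁆⁆ = ⁅⁅y, xb⁆, x'⁆ + ⁅xb, ⁅y, x'⁆⁆ := leibniz_lie y xb x'
              rw [hjac, hzero, zero_lie, zero_add]
              exact hgenVm xb (hmle β hβ hxb) _
        · -- recursive case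
          have hgood : δ ≠ γ ∨ cc γ ≠ 1 := by
            by_contra h
            push_neg at h
            exact hbranch ⟨h.1, h.2⟩
          have haδ : a ≠ δ := by
            intro h
            by_cases hgd : γ = δ
            · exact haγ (hgd ▸ h)
            · exact hccγ (aux_simple_coeff hB hδPi (h ▸ hca) hγ hgd)
          have haδΔ : a - δ ∈ Δ := aux_sub_mem hΔ haΔ hδΔ haδ hinner
          obtain ⟨hdec, hht'⟩ := aux_sub_simple_decomp hδPi hca hccδ
          set c' : V → ℕ := fun x => if x = δ then cc x - 1 else cc x with hc'
          have hc'γ : c' γ ≠ 0 := by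
            by_cases hgd : γ = δ
            · subst hgd
              have h2 : 2 ≤ cc γ := by
                rcases hgood with h | h
                · exact absurd rfl h
                · omega
              simp only [hc', if_pos rfl]
              omega
            · simpa only [hc', if_neg hgd] using hccγ
          have hlt : (∑ x ∈ Pi, c' x) < n := by
            rw [← hht, ← hht']
            exact Nat.lt_succ_self _
          have hrec := ih _ hlt c' (a - δ) haδΔ hdec rfl γ hγ hc'γ β hβ hcond
          intro z hz
          have heq : δ + (a - δ) = a := by abel
          obtain ⟨y, hy, x, hx, rfl⟩ :=
            D.lie_span δ hδΔ (a - δ) haδΔ (by rw [heq]; exact haΔ) z (by rwa [heq])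
          have hxVm : x ∈ Vm := hrec hx
          have hyb : y ∈ b := hposb δ ⟨hδΔ, _, aux_ind_decomp hδPi⟩ hy
          rw [← lie_skew]
          exact neg_mem (h_Vmb x hxVm y hyb)
  -- conclude
  obtain ⟨β, hβ, γ, hγ, hcγ, hcond⟩ := hmeet
  have : D.gs α ≤ Vm := main (∑ x ∈ Pi, c x) c α hα.1 hc rfl γ hγ hcγ β hβ hcond
  exact this.trans le_sup_left
end
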